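/- Let $\lambda_b > 0$, $\rho_b > 0$, $\rho_s > 0$, $r_s \ge 0$, $T_1 = \lambda_b \rho_b$, $T_2 = \lambda_b \rho_s$, $f_s = \lambda_b r_s$, $R_s = 1/\rho_s$, and let $P_J(r_s) = \int_0^{r_s} (1 - e^{-T_1 x})(1 - e^{-T_2 (r_s - x)}) \, 2\lambda_b e^{-2\lambda_b x} dx + \int_{r_s}^{\infty} (1 - e^{-T_2 (x - r_s)}) \, 2\lambda_b e^{-2\lambda_b x} dx$. Then $\frac{e^{-2 f_s}}{1 + 2 R_s} \le P_J(r_s) \le (1 - e^{-2 f_s}) + \frac{e^{-2 f_s}}{1 + 2 R_s}$. -/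

import Mathlib

open Real MeasureTheory

lemma int_exp_Ioi (a b : ℝ) (hb : 0 < b) :
    ∫ x in Set.Ioi a, Real.exp (-b * x) = Real.exp (-b * a) / b := by
  have h := integral_Ioi_of_hasDerivAt_of_tendsto'
    (f := fun x => -Real.exp (-b * x) / b) (f' := fun x => Real.exp (-b * x)) (a := a) (m := 0)
    (fun x _ => by
      have h1 : HasDerivAt (fun x => Real.exp (-b * x)) (Real.exp (-b * x) * (-b * 1)) x :=
        ((hasDerivAt_id x).const_mul (-b)).exp
      have h2 := (h1.neg).div_const b
      exact h2.congr_deriv (by rw [div_eq_iff hb.ne']; ring))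
    (exp_neg_integrableOn_Ioi a hb)
    (by
      have h0 : Filter.Tendsto (fun x : ℝ => b * x) Filter.atTop Filter.atTop :=
        Filter.tendsto_id.const_mul_atTop hb
      have h1 : Filter.Tendsto (fun x : ℝ => Real.exp (-(b * x))) Filter.atTop (nhds 0) :=
        Real.tendsto_exp_neg_atTop_nhds_zero.comp h0
      have h2 : Filter.Tendsto (fun x : ℝ => Real.exp (-b * x)) Filter.atTop (nhds 0) := by
        simpa [neg_mul] using h1
      simpa using (h2.neg).div_const b)
  rw [h]
  field_simp
  ring

/-- **Proposition 2.**  Bounds on the connection failure probability for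
fixed-distance RIS deployment. -/
theorem connection_failure_probability_bounds
    (lb ρb ρs rs : ℝ) (hlb : 0 < lb) (hρb : 0 < ρb) (hρs : 0 < ρs) (hrs : 0 ≤ rs)
    (T1 T2 fs Rs : ℝ)
    (hT1 : T1 = lb * ρb) (hT2 : T2 = lb * ρs) (hfs : fs = lb * rs) (hRs : Rs = 1 / ρs)
    (PJ : ℝ)
    (hPJ : PJ = (∫ x in (0:ℝ)..rs,
        (1 - exp (-T1 * x)) * (1 - exp (-T2 * (rs - x))) * (2 * lb * exp (-2 * lb * x)))
      + (∫ x in Set.Ioi rs, (1 - exp (-T2 * (x - rs))) * (2 * lb * exp (-2 * lb * x)))) :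
    exp (-2 * fs) / (1 + 2 * Rs) ≤ PJ ∧
      PJ ≤ (1 - exp (-2 * fs)) + exp (-2 * fs) / (1 + 2 * Rs) := by
  have hT1pos : 0 < T1 := by rw [hT1]; positivity
  have hT2pos : 0 < T2 := by rw [hT2]; positivity
  have h2lb : (0:ℝ) < 2 * lb := by positivity
  -- tail integral equals exp (-2 fs) / (1 + 2 Rs)
  have htail : (∫ x in Set.Ioi rs, (1 - exp (-T2 * (x - rs))) * (2 * lb * exp (-2 * lb * x)))
      = exp (-2 * fs) / (1 + 2 * Rs) := by
    have heq : ∀ x : ℝ, (1 - exp (-T2 * (x - rs))) * (2 * lb * exp (-2 * lb * x))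
        = 2 * lb * exp (-(2 * lb) * x) - (2 * lb * exp (T2 * rs)) * exp (-(T2 + 2 * lb) * x) := by
      intro x
      have e1 : Real.exp (-T2 * (x - rs)) * Real.exp (-2 * lb * x)
          = Real.exp (T2 * rs) * Real.exp (-(T2 + 2 * lb) * x) := by
        rw [← Real.exp_add, ← Real.exp_add]; congr 1; ring
      have e2 : (-(2*lb)*x) = (-2*lb*x) := by ring
      rw [e2]
      nlinarith [e1]
    have hi1 : IntegrableOn (fun x => Real.exp (-(2 * lb) * x)) (Set.Ioi rs) :=
      exp_neg_integrableOn_Ioi rs h2lb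
    have hi2 : IntegrableOn (fun x => Real.exp (-(T2 + 2 * lb) * x)) (Set.Ioi rs) :=
      exp_neg_integrableOn_Ioi rs (by positivity)
    rw [show (fun x => (1 - exp (-T2 * (x - rs))) * (2 * lb * exp (-2 * lb * x)))
        = fun x => 2 * lb * exp (-(2 * lb) * x) - (2 * lb * exp (T2 * rs)) * exp (-(T2 + 2 * lb) * x)
      from funext heq]
    rw [integral_sub (hi1.const_mul _) (hi2.const_mul _), integral_const_mul, integral_const_mul,
      int_exp_Ioi _ _ h2lb, int_exp_Ioi _ _ (by positivity : (0:ℝ) < T2 + 2 * lb)]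
    have key : Real.exp (T2 * rs) * Real.exp (-(T2 + 2 * lb) * rs) = Real.exp (-(2 * lb) * rs) := by
      rw [← Real.exp_add]; congr 1; ring
    have hfs2 : Real.exp (-2 * fs) = Real.exp (-(2 * lb) * rs) := by rw [hfs]; congr 1; ring
    rw [hfs2, hRs, hT2]
    have h1 : (0:ℝ) < lb * ρs + 2 * lb := by positivity
    have keyX : Real.exp (lb*ρs*rs) * Real.exp ((-(2*lb) + -(lb*ρs))*rs) = Real.exp (-(2*lb*rs)) := by
      rw [← Real.exp_add]; congr 1; ring
    field_simp
    have hA : rexp (lb * ρs * rs) * rexp ((-(2 * lb) - lb * ρs) * rs) = rexp (-(2 * lb * rs)) := by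
      rw [← Real.exp_add]; congr 1; ring
    have hB : rexp (lb * rs * ρs) * rexp (-(lb * rs * (ρs + 2))) = rexp (-(2 * lb * rs)) := by
      rw [← Real.exp_add]; congr 1; ring
    linear_combination (-2) * hB
  -- first integral bounds
  set g : ℝ → ℝ := fun x => (1 - exp (-T1 * x)) * (1 - exp (-T2 * (rs - x))) * (2 * lb * exp (-2 * lb * x)) with hg
  have hgcont : Continuous g := by fun_prop
  have hI1nonneg : 0 ≤ ∫ x in (0:ℝ)..rs, g x := by
    apply intervalIntegral.integral_nonneg hrs
    intro x hx
    have h1 : Real.exp (-T1 * x) ≤ 1 := Real.exp_le_one_iff.mpr (by nlinarith [hx.1])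
    have h2 : Real.exp (-T2 * (rs - x)) ≤ 1 := Real.exp_le_one_iff.mpr (by nlinarith [hx.2])
    have h3 : 0 < 2 * lb * Real.exp (-2 * lb * x) := by positivity
    simp only [hg]
    exact mul_nonneg (mul_nonneg (by linarith) (by linarith)) h3.le
  have hI1le : (∫ x in (0:ℝ)..rs, g x) ≤ 1 - Real.exp (-2 * fs) := by
    have hmono : (∫ x in (0:ℝ)..rs, g x) ≤ ∫ x in (0:ℝ)..rs, 2 * lb * Real.exp (-2 * lb * x) := by
      apply intervalIntegral.integral_mono_on hrs (hgcont.intervalIntegrable _ _)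
        ((by fun_prop : Continuous fun x => 2 * lb * Real.exp (-2 * lb * x)).intervalIntegrable _ _)
      intro x hx
      have h1 : 0 < Real.exp (-T1 * x) := Real.exp_pos _
      have h2 : 0 < Real.exp (-T2 * (rs - x)) := Real.exp_pos _
      have h1' : Real.exp (-T1 * x) ≤ 1 := Real.exp_le_one_iff.mpr (by nlinarith [hx.1])
      have h2' : Real.exp (-T2 * (rs - x)) ≤ 1 := Real.exp_le_one_iff.mpr (by nlinarith [hx.2])
      have h3 : 0 < 2 * lb * Real.exp (-2 * lb * x) := by positivity
      have hab : (1 - Real.exp (-T1 * x)) * (1 - Real.exp (-T2 * (rs - x))) ≤ 1 := by nlinarith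
      simp only [hg]
      exact mul_le_of_le_one_left h3.le hab
    have hcalc : (∫ x in (0:ℝ)..rs, 2 * lb * Real.exp (-2 * lb * x)) = 1 - Real.exp (-2 * fs) := by
      have hderiv : ∀ x ∈ Set.uIcc (0:ℝ) rs,
          HasDerivAt (fun x => -Real.exp (-2 * lb * x)) (2 * lb * Real.exp (-2 * lb * x)) x := by
        intro x _
        have h1 : HasDerivAt (fun x => Real.exp (-2 * lb * x)) (Real.exp (-2 * lb * x) * (-2 * lb * 1)) x :=
          ((hasDerivAt_id x).const_mul (-2 * lb)).exp
        have h2 := h1.neg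
        exact h2.congr_deriv (by ring)
      rw [intervalIntegral.integral_eq_sub_of_hasDerivAt hderiv
        ((by fun_prop : Continuous fun x => 2 * lb * Real.exp (-2 * lb * x)).intervalIntegrable _ _)]
      rw [hfs]
      simp
      ring_nf
    linarith [hmono, hcalc.le, hcalc.ge]
  rw [hPJ, htail]
  constructor <;> [linarith; linarith]
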